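/- For any real 0 < q < 1 and positive integers m ≤ n, the telescoping identity (q^m/[m]_q) · ∑_{a=m}^{n} q^{-a} C(a,n,q,x) = C(m,n,q,x)/[n]_q holds, where C(m,n,q,x) := (-1)^{m-1} q^{m(m+1)/2} · ∏_{h=1}^{n}([h]_q − q^h x)/([m]_q! [n−m]_q!). -/

import Mathlib

noncomputable def qint (q : ℝ) (m : ℕ) : ℝ := (1 - q ^ m) / (1 - q)

noncomputable def qfact (q : ℝ) (m : ℕ) : ℝ := ∏ a ∈ Finset.Icc 1 m, qint q a

/-- The connector `C(m,n,q,x)`. -/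
noncomputable def connector (q : ℝ) (m n : ℕ) (x : ℝ) : ℝ :=
  (-1 : ℝ) ^ (m - 1) * q ^ (m * (m + 1) / 2) *
    (∏ h ∈ Finset.Icc 1 n, (qint q h - q ^ h * x)) / (qfact q m * qfact q (n - m))

lemma qint_pos {q : ℝ} (hq0 : 0 < q) (hq1 : q < 1) {k : ℕ} (hk : 0 < k) : 0 < qint q k := by
  have h1 : q ^ k < 1 := pow_lt_one₀ hq0.le hq1 hk.ne'
  exact div_pos (by linarith) (by linarith)

lemma qfact_pos {q : ℝ} (hq0 : 0 < q) (hq1 : q < 1) (k : ℕ) : 0 < qfact q k := by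
  refine Finset.prod_pos fun i hi => qint_pos hq0 hq1 ?_
  exact (Finset.mem_Icc.mp hi).1

lemma qfact_succ (q : ℝ) (k : ℕ) : qfact q (k + 1) = qfact q k * qint q (k + 1) := by
  unfold qfact
  rw [Finset.prod_Icc_succ_top (by omega)]

lemma qfact_pred (q : ℝ) {k : ℕ} (hk : 0 < k) : qfact q k = qfact q (k - 1) * qint q k := by
  obtain ⟨j, rfl⟩ := Nat.exists_eq_add_of_lt hk
  simp only [Nat.add_sub_cancel, zero_add]
  exact qfact_succ q j

lemma qint_split (q : ℝ) (hq : q ≠ 1) {m n : ℕ} (hmn : m ≤ n) :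
    qint q n = qint q m + q ^ m * qint q (n - m) := by
  have h1 : (1:ℝ) - q ≠ 0 := by intro h; apply hq; linarith
  have hp : q ^ m * q ^ (n - m) = q ^ n := by
    rw [← pow_add]; congr 1; omega
  unfold qint
  field_simp
  linear_combination hp

lemma tri (a : ℕ) : a * (a + 1) / 2 = a * (a - 1) / 2 + a := by
  rcases a with _ | b
  · simp
  · have h2 : (b+1) * ((b+1) + 1) = (b+1)*b + 2*(b+1) := by ring
    have h3 : (b+1) * ((b+1) - 1) = (b+1)*b := by simp
    omega

lemma tele (q : ℝ) (hq0 : 0 < q) (hq1 : q < 1) (n : ℕ) :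
    ∀ d m : ℕ, m + d = n → 0 < m →
    ∑ a ∈ Finset.Icc m n, ((-1:ℝ) ^ (a - 1) * q ^ (a * (a - 1) / 2) / (qfact q a * qfact q (n - a)))
      = (-1:ℝ) ^ (m - 1) * q ^ (m * (m - 1) / 2) /
          (qint q n * (qfact q (m - 1) * qfact q (n - m))) := by
  have hqne : q ≠ 1 := hq1.ne
  intro d
  induction d with
  | zero =>
    intro m hd hm
    have hmn : m = n := by omega
    subst hmn
    rw [Finset.Icc_self, Finset.sum_singleton]
    rw [qfact_pred q hm]
    rw [show m - m = 0 from Nat.sub_self m]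
    have h1 : qint q m ≠ 0 := (qint_pos hq0 hq1 hm).ne'
    have h2 : qfact q (m-1) ≠ 0 := (qfact_pos hq0 hq1 _).ne'
    ring
  | succ d ih =>
    intro m hd hm
    have hmn : m < n := by omega
    rw [Finset.Icc_eq_cons_Ioc hmn.le, Finset.sum_cons, ← Finset.Icc_add_one_left_eq_Ioc,
      ih (m+1) (by omega) (by omega)]
    simp only [Nat.add_sub_cancel]
    have e1 : n - (m + 1) = n - m - 1 := by omega
    rw [e1]
    have e2 : (m+1) * m / 2 = m * (m - 1) / 2 + m := by
      rw [mul_comm]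
      exact tri m
    rw [e2, pow_add]
    have e3 : (-1:ℝ) ^ m = -(-1:ℝ) ^ (m - 1) := by
      obtain ⟨k, rfl⟩ := Nat.exists_eq_add_of_lt hm
      simp [pow_succ]
    rw [e3]
    rw [qfact_pred q hm, qfact_pred q (k := n - m) (by omega)]
    have hsplit := qint_split q hqne hmn.le
    have hn0 : qint q n ≠ 0 := (qint_pos hq0 hq1 (by omega : 0 < n)).ne'
    rw [hsplit] at hn0 ⊢
    have h1 : qint q m ≠ 0 := (qint_pos hq0 hq1 hm).ne'
    have h2 : qint q (n - m) ≠ 0 := (qint_pos hq0 hq1 (by omega : 0 < n - m)).ne'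
    have h3 : qfact q (m-1) ≠ 0 := (qfact_pos hq0 hq1 _).ne'
    have h4 : qfact q (n-m-1) ≠ 0 := (qfact_pos hq0 hq1 _).ne'
    have hn0' : qint q m + qint q (n - m) * q ^ m ≠ 0 := by
      rwa [mul_comm] at hn0
    field_simp
    ring

theorem connector_telescoping_left (q : ℝ) (hq0 : 0 < q) (hq1 : q < 1) (m n : ℕ)
    (hm : 0 < m) (hmn : m ≤ n) (x : ℝ) :
    q ^ m / qint q m * ∑ a ∈ Finset.Icc m n, (q ^ a)⁻¹ * connector q a n x =
      connector q m n x / qint q n := by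
  have hsum : ∀ a ∈ Finset.Icc m n, (q ^ a)⁻¹ * connector q a n x =
      ((-1:ℝ) ^ (a - 1) * q ^ (a * (a - 1) / 2) / (qfact q a * qfact q (n - a))) *
        (∏ h ∈ Finset.Icc 1 n, (qint q h - q ^ h * x)) := by
    intro a ha
    have ha1 : 0 < a := lt_of_lt_of_le hm (Finset.mem_Icc.mp ha).1
    unfold connector
    rw [tri a, pow_add]
    have hqa : (q:ℝ) ^ a ≠ 0 := pow_ne_zero _ hq0.ne'
    have h1 : qfact q a ≠ 0 := (qfact_pos hq0 hq1 _).ne'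
    have h2 : qfact q (n - a) ≠ 0 := (qfact_pos hq0 hq1 _).ne'
    field_simp
    exact Finset.prod_congr rfl fun h _ => by ring
  rw [Finset.sum_congr rfl hsum, ← Finset.sum_mul,
    tele q hq0 hq1 n (n - m) m (by omega) hm]
  unfold connector
  rw [tri m, pow_add, qfact_pred q hm]
  have h1 : qint q m ≠ 0 := (qint_pos hq0 hq1 hm).ne'
  have hn0 : qint q n ≠ 0 := (qint_pos hq0 hq1 (by omega : 0 < n)).ne'
  have h3 : qfact q (m-1) ≠ 0 := (qfact_pos hq0 hq1 _).ne'
  have h4 : qfact q (n-m) ≠ 0 := (qfact_pos hq0 hq1 _).ne'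
  field_simp
  exact Finset.prod_congr rfl fun h _ => by ring
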